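/- Every proper subgroup of A₅ whose order is divisible by 4 has a fixed point in {1,...,5}, i.e., there exists p ∈ {1,...,5} fixed by every element of the subgroup. -/

import Mathlib

open Equiv

/-- The finset of nontrivial even involutions fixing `p` (double transpositions fixing `p`). -/
private def Dfix (p : Fin 5) : Finset (Perm (Fin 5)) :=
  Finset.univ.filter (fun σ : Perm (Fin 5) =>
    Perm.sign σ = 1 ∧ σ ^ 2 = 1 ∧ σ ≠ 1 ∧ σ p = p)

set_option maxRecDepth 1000000 in
private lemma no_order_four : ∀ σ : Perm (Fin 5), Perm.sign σ = 1 → σ ^ 4 = 1 → σ ^ 2 = 1 := by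
  decide

set_option maxRecDepth 1000000 in
private lemma uniq_fix : ∀ σ : Perm (Fin 5), Perm.sign σ = 1 → σ ^ 2 = 1 → σ ≠ 1 →
    ∃ x, σ x = x ∧ ∀ y, σ y = y → y = x := by
  decide

set_option maxRecDepth 1000000 in
private lemma card_Dfix : ∀ p : Fin 5, (Dfix p).card = 3 := by
  decide

set_option maxRecDepth 1000000 in
private lemma witnessW : ∀ p q : Fin 5, p ≠ q → ∃ r s t : Fin 5,
    (Perm.sign (swap q r * swap s t) = 1 ∧ (swap q r * swap s t) ^ 2 = 1 ∧
      swap q r * swap s t ≠ 1 ∧ (swap q r * swap s t) p = p) ∧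
    (Perm.sign (swap p r * swap s t) = 1 ∧ (swap p r * swap s t) ^ 2 = 1 ∧
      swap p r * swap s t ≠ 1 ∧ (swap p r * swap s t) q = q) ∧
    (Perm.sign (swap p s * swap r t) = 1 ∧ (swap p s * swap r t) ^ 2 = 1 ∧
      swap p s * swap r t ≠ 1 ∧ (swap p s * swap r t) q = q) ∧
    ((swap q r * swap s t) * (swap p r * swap s t)) ^ 3 = 1 ∧
      (swap q r * swap s t) * (swap p r * swap s t) ≠ 1 ∧
    ((swap q r * swap s t) * (swap p s * swap r t)) ^ 5 = 1 ∧
      (swap q r * swap s t) * (swap p s * swap r t) ≠ 1 := by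
  decide

theorem proper_subgroup_A5_order_div_four_has_fixed_point
    (H : Subgroup (Perm (Fin 5)))
    (hlt : H < alternatingGroup (Fin 5))
    (hdvd : 4 ∣ Nat.card H) :
    ∃ p : Fin 5, ∀ σ ∈ H, σ p = p := by
  have hA : H ≤ alternatingGroup (Fin 5) := hlt.le
  have hsign : ∀ x ∈ H, Perm.sign x = 1 := fun x hx => Perm.mem_alternatingGroup.mp (hA hx)
  have hcardA : Nat.card (alternatingGroup (Fin 5)) = 60 := by
    have h2 := two_mul_card_alternatingGroup (α := Fin 5)
    rw [Fintype.card_perm, Fintype.card_fin] at h2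
    have h5 : Nat.factorial 5 = 120 := by decide
    rw [h5] at h2
    rw [Nat.card_eq_fintype_card]
    omega
  have hHdvd60 : Nat.card H ∣ 60 := hcardA ▸ Subgroup.card_dvd_of_le hA
  -- a Sylow 2-subgroup of H has order 4
  obtain ⟨P⟩ := Sylow.nonempty (p := 2) (G := H)
  have hPH : Nat.card P ∣ Nat.card H := Subgroup.card_subgroup_dvd_card (P : Subgroup H)
  have hP60 : Nat.card P ∣ 60 := hPH.trans hHdvd60
  have h4P : 4 ∣ Nat.card P := by
    have := P.pow_dvd_card_of_pow_dvd_card (p := 2) (n := 2) (by simpa using hdvd)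
    simpa using this
  obtain ⟨k, hk⟩ := IsPGroup.iff_card.mp P.isPGroup'
  have hk2 : k ≤ 2 := by
    by_contra hk3
    push_neg at hk3
    have h8 : (8 : ℕ) ∣ 2 ^ k := by
      have : (2 : ℕ) ^ 3 ∣ 2 ^ k := pow_dvd_pow 2 hk3
      simpa using this
    have : (8 : ℕ) ∣ 60 := h8.trans (hk ▸ hP60)
    norm_num at this
  have hcardP : Nat.card P = 4 := by
    rw [hk]
    refine Nat.dvd_antisymm ?_ (hk ▸ h4P)
    calc (2:ℕ) ^ k ∣ 2 ^ 2 := pow_dvd_pow 2 hk2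
    _ = 4 := by norm_num
  -- push it into Perm (Fin 5)
  set K : Subgroup (Perm (Fin 5)) := (P : Subgroup H).map H.subtype with hKdef
  have hKH : K ≤ H := Subgroup.map_subtype_le _
  have hcardK : Nat.card K = 4 := by
    rw [← hcardP]
    exact Nat.card_congr
      ((Subgroup.equivMapOfInjective (P : Subgroup H) H.subtype
        (Subgroup.subtype_injective H)).symm.toEquiv)
  have hsignK : ∀ x ∈ K, Perm.sign x = 1 := fun x hx => hsign x (hKH hx)
  have hsqK : ∀ x ∈ K, x ^ 2 = 1 := by
    intro x hx
    have h4 : x ^ 4 = 1 := by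
      have hdvd4 : orderOf x ∣ 4 := hcardK ▸ K.orderOf_dvd_natCard hx
      exact orderOf_dvd_iff_pow_eq_one.mp hdvd4
    exact no_order_four x (hsignK x hx) h4
  -- two distinct nontrivial elements of K
  obtain ⟨a1, ha1K, ha1ne⟩ : ∃ a ∈ K, a ≠ 1 := by
    rcases K.bot_or_exists_ne_one with h | h
    · rw [h] at hcardK; simp [Nat.card_eq_fintype_card] at hcardK
    · exact h
  obtain ⟨a2, ha2K, ha2ne, ha21⟩ : ∃ a ∈ K, a ≠ 1 ∧ a ≠ a1 := by
    by_contra hcon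
    push_neg at hcon
    have hsub : (K : Set (Perm (Fin 5))) ⊆ {1, a1} := by
      intro x hx
      rcases eq_or_ne x 1 with h | h
      · exact Or.inl h
      · exact Or.inr (hcon x hx h)
    have hle : (K : Set (Perm (Fin 5))).ncard ≤ ({1, a1} : Set (Perm (Fin 5))).ncard :=
      Set.ncard_le_ncard hsub (Set.toFinite _)
    have h2 : ({1, a1} : Set (Perm (Fin 5))).ncard ≤ 2 := by
      refine (Set.ncard_insert_le _ _).trans ?_
      simp
    have hKn : (K : Set (Perm (Fin 5))).ncard = 4 := by
      rw [← Nat.card_coe_set_eq]; exact hcardK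
    omega
  set a3 := a1 * a2 with ha3def
  have ha3K : a3 ∈ K := mul_mem ha1K ha2K
  have ha3ne : a3 ≠ 1 := by
    intro h
    have h2 : a2 * a2 = 1 := by have := hsqK a2 ha2K; rwa [pow_two] at this
    have h1 : a1 = a2⁻¹ := mul_eq_one_iff_eq_inv.mp h
    rw [inv_eq_of_mul_eq_one_right h2] at h1
    exact ha21 h1.symm
  have ha31 : a3 ≠ a1 := fun h => ha2ne (by
    have := congrArg (fun x => a1⁻¹ * x) h
    simpa [ha3def, mul_assoc] using this)
  have ha32 : a3 ≠ a2 := fun h => ha1ne (by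
    have := congrArg (fun x => x * a2⁻¹) h
    simpa [ha3def, mul_assoc] using this)
  -- the common fixed point
  obtain ⟨p, hp, hpu⟩ := uniq_fix a1 (hsignK a1 ha1K) (hsqK a1 ha1K) ha1ne
  have hcomm : a1 * a2 = a2 * a1 := by
    have h3 : (a1 * a2) * (a1 * a2) = 1 := by
      have := hsqK a3 ha3K; rwa [ha3def, pow_two] at this
    have h1 : a1 * a1 = 1 := by have := hsqK a1 ha1K; rwa [pow_two] at this
    have h2 : a2 * a2 = 1 := by have := hsqK a2 ha2K; rwa [pow_two] at this
    have hinv : (a1 * a2)⁻¹ = a1 * a2 := inv_eq_of_mul_eq_one_right h3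
    calc a1 * a2 = (a1 * a2)⁻¹ := hinv.symm
    _ = a2⁻¹ * a1⁻¹ := mul_inv_rev a1 a2
    _ = a2 * a1 := by rw [inv_eq_of_mul_eq_one_right h2, inv_eq_of_mul_eq_one_right h1]
  have hp2 : a2 p = p := by
    apply hpu
    calc a1 (a2 p) = (a1 * a2) p := rfl
    _ = (a2 * a1) p := by rw [hcomm]
    _ = a2 (a1 p) := rfl
    _ = a2 p := by rw [hp]
  have hp3 : a3 p = p := by
    calc a3 p = a1 (a2 p) := rfl
    _ = a1 p := by rw [hp2]
    _ = p := hp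
  have hmemD : ∀ a ∈ K, a ≠ 1 → a p = p → a ∈ Dfix p := by
    intro a haK hane hap
    exact Finset.mem_filter.mpr ⟨Finset.mem_univ _, hsignK a haK, hsqK a haK, hane, hap⟩
  have hDp : ({a1, a2, a3} : Finset (Perm (Fin 5))) = Dfix p := by
    apply Finset.eq_of_subset_of_card_le
    · intro x hx
      simp only [Finset.mem_insert, Finset.mem_singleton] at hx
      rcases hx with h | h | h
      · exact h ▸ hmemD a1 ha1K ha1ne hp
      · exact h ▸ hmemD a2 ha2K ha2ne hp2
      · exact h ▸ hmemD a3 ha3K ha3ne hp3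
    · rw [card_Dfix p]
      rw [Finset.card_eq_three.mpr ⟨a1, a2, a3, Ne.symm ha21, Ne.symm ha31, Ne.symm ha32, rfl⟩]
  have hDpH : ∀ x ∈ Dfix p, x ∈ H := by
    intro x hx
    rw [← hDp] at hx
    simp only [Finset.mem_insert, Finset.mem_singleton] at hx
    rcases hx with h | h | h
    · exact h ▸ hKH ha1K
    · exact h ▸ hKH ha2K
    · exact h ▸ hKH ha3K
  -- p is the fixed point of all of H
  refine ⟨p, fun σ hσ => ?_⟩
  by_contra hne
  set q := σ p with hqdef
  have hpq : p ≠ q := fun h => hne h.symm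
  -- the conjugates of a1,a2,a3 give all double transpositions fixing q, inside H
  have hconjH : ∀ a ∈ K, σ * a * σ⁻¹ ∈ H := fun a haK =>
    mul_mem (mul_mem hσ (hKH haK)) (inv_mem hσ)
  have hconj_ne : ∀ a : Perm (Fin 5), a ≠ 1 → σ * a * σ⁻¹ ≠ 1 := by
    intro a ha h
    apply ha
    have := congrArg (fun x => σ⁻¹ * x * σ) h
    simpa [mul_assoc] using this
  have hconj_sq : ∀ a : Perm (Fin 5), a ^ 2 = 1 → (σ * a * σ⁻¹) ^ 2 = 1 := by
    intro a ha
    have h' : (σ * a * σ⁻¹) * (σ * a * σ⁻¹) = σ * (a * a) * σ⁻¹ := by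
      simp [mul_assoc]
    have ha' : a * a = 1 := by rwa [pow_two] at ha
    rw [pow_two, h', ha', mul_one, mul_inv_cancel]
  have hconj_fix : ∀ a : Perm (Fin 5), a p = p → (σ * a * σ⁻¹) q = q := by
    intro a ha
    have : (σ * a * σ⁻¹) q = σ (a (σ⁻¹ (σ p))) := rfl
    rw [this, show σ⁻¹ (σ p) = p from σ.symm_apply_apply p, ha]
  have hmemDq : ∀ a ∈ K, a ≠ 1 → a p = p → σ * a * σ⁻¹ ∈ Dfix q := by
    intro a haK hane hap
    refine Finset.mem_filter.mpr ⟨Finset.mem_univ _, hsign _ (hconjH a haK),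
      hconj_sq a (hsqK a haK), hconj_ne a hane, hconj_fix a hap⟩
  have hconj_inj : ∀ x y : Perm (Fin 5), σ * x * σ⁻¹ = σ * y * σ⁻¹ → x = y := by
    intro x y h
    exact mul_left_cancel (mul_right_cancel h)
  set b1 := σ * a1 * σ⁻¹ with hb1
  set b2 := σ * a2 * σ⁻¹ with hb2
  set b3 := σ * a3 * σ⁻¹ with hb3
  have hDq : ({b1, b2, b3} : Finset (Perm (Fin 5))) = Dfix q := by
    apply Finset.eq_of_subset_of_card_le
    · intro x hx
      simp only [Finset.mem_insert, Finset.mem_singleton] at hx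
      rcases hx with h | h | h
      · exact h ▸ hmemDq a1 ha1K ha1ne hp
      · exact h ▸ hmemDq a2 ha2K ha2ne hp2
      · exact h ▸ hmemDq a3 ha3K ha3ne hp3
    · rw [card_Dfix q]
      rw [Finset.card_eq_three.mpr ⟨b1, b2, b3,
        fun h => ha21 (hconj_inj a1 a2 h).symm,
        fun h => ha31 (hconj_inj a1 a3 h).symm,
        fun h => ha32 (hconj_inj a2 a3 h).symm, rfl⟩]
  have hDqH : ∀ x ∈ Dfix q, x ∈ H := by
    intro x hx
    rw [← hDq] at hx
    simp only [Finset.mem_insert, Finset.mem_singleton] at hx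
    rcases hx with h | h | h
    · exact h ▸ hconjH a1 ha1K
    · exact h ▸ hconjH a2 ha2K
    · exact h ▸ hconjH a3 ha3K
  -- now find elements of order 3 and 5 in H
  obtain ⟨r, s, t, hfa, hfb3, hfb5, hx3, hx3ne, hx5, hx5ne⟩ := witnessW p q hpq
  have haH : swap q r * swap s t ∈ H :=
    hDpH _ (Finset.mem_filter.mpr ⟨Finset.mem_univ _, hfa.1, hfa.2.1, hfa.2.2.1, hfa.2.2.2⟩)
  have hb3H : swap p r * swap s t ∈ H :=
    hDqH _ (Finset.mem_filter.mpr ⟨Finset.mem_univ _, hfb3.1, hfb3.2.1, hfb3.2.2.1, hfb3.2.2.2⟩)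
  have hb5H : swap p s * swap r t ∈ H :=
    hDqH _ (Finset.mem_filter.mpr ⟨Finset.mem_univ _, hfb5.1, hfb5.2.1, hfb5.2.2.1, hfb5.2.2.2⟩)
  have hxH : (swap q r * swap s t) * (swap p r * swap s t) ∈ H := mul_mem haH hb3H
  have hyH : (swap q r * swap s t) * (swap p s * swap r t) ∈ H := mul_mem haH hb5H
  haveI : Fact (Nat.Prime 3) := ⟨by norm_num⟩
  haveI : Fact (Nat.Prime 5) := ⟨by norm_num⟩
  have h3dvd : 3 ∣ Nat.card H := by
    have h := H.orderOf_dvd_natCard hxH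
    rwa [orderOf_eq_prime hx3 hx3ne] at h
  have h5dvd : 5 ∣ Nat.card H := by
    have h := H.orderOf_dvd_natCard hyH
    rwa [orderOf_eq_prime hx5 hx5ne] at h
  -- hence |H| = 60 and H = A₅, contradiction
  have hn60 : Nat.card H = 60 := by
    refine Nat.dvd_antisymm hHdvd60 ?_
    have hle : Nat.card H ≤ 60 := Nat.le_of_dvd (by norm_num) hHdvd60
    omega
  apply hlt.ne
  apply SetLike.coe_injective
  apply Set.eq_of_subset_of_ncard_le hlt.le ?_ (Set.toFinite _)
  have h1 : (H : Set (Perm (Fin 5))).ncard = 60 := by rw [← Nat.card_coe_set_eq]; exact hn60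
  have h2 : ((alternatingGroup (Fin 5) : Subgroup (Perm (Fin 5))) :
      Set (Perm (Fin 5))).ncard = 60 := by rw [← Nat.card_coe_set_eq]; exact hcardA
  rw [h1, h2]
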